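/- Let q ≡ 1 (mod 4) be a prime power with q not a power of 5, i ∈ F_q with i² = -1. In PSL(2,q) acting on P = (F_q²\{0})/⟨i⟩, the setwise stabilizer of the unordered pair e = {[(1,0)], [(0,1)]} is the group generated by (classes of) [[0,-1],[1,0]] and [[0,i],[i,0]], which has order 4. -/

import Mathlib

open Matrix MulAction Pointwise

abbrev SL2 (F : Type) [Field F] := Matrix.SpecialLinearGroup (Fin 2) F

abbrev PSL2 (F : Type) [Field F] := SL2 F ⧸ Subgroup.center (SL2 F)

/-- Nonzero vectors of `F²`. -/
def Vec (F : Type) [Field F] := {v : Fin 2 → F // v ≠ 0}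

/-- Two nonzero vectors are related if they differ by multiplication by a power of `i`. -/
def vrel (F : Type) [Field F] (i : F) (v w : Vec F) : Prop :=
  ∃ n : ℕ, (w.1 : Fin 2 → F) = i ^ n • v.1

/-- The point set `P = (F² \ {0})/⟨i⟩`. -/
def Pts (F : Type) [Field F] (i : F) := Quot (vrel F i)

/-- The class of a nonzero vector in `P`. -/
def mkPt (F : Type) [Field F] (i : F) (v : Fin 2 → F) (hv : v ≠ 0) : Pts F i :=
  Quot.mk _ ⟨v, hv⟩

lemma vec_fst_ne_zero {F : Type} [Field F] (b : F) : ![(1 : F), b] ≠ 0 := by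
  intro h
  simpa using congrFun h 0

lemma vec_snd_ne_zero {F : Type} [Field F] (a : F) : ![a, (1 : F)] ≠ 0 := by
  intro h
  simpa using congrFun h 1

/-- `SL(2,q)` acts on nonzero vectors. -/
def slVecSMul {F : Type} [Field F] (A : SL2 F) (v : Vec F) : Vec F :=
  ⟨(A : Matrix (Fin 2) (Fin 2) F) *ᵥ v.1, by
    intro h
    apply v.2
    have h2 : ((A⁻¹ : SL2 F) : Matrix (Fin 2) (Fin 2) F) *ᵥ
        ((A : Matrix (Fin 2) (Fin 2) F) *ᵥ v.1) = 0 := by rw [h, Matrix.mulVec_zero]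
    rwa [Matrix.mulVec_mulVec, ← Matrix.SpecialLinearGroup.coe_mul, inv_mul_cancel,
      Matrix.SpecialLinearGroup.coe_one, Matrix.one_mulVec] at h2⟩

instance (F : Type) [Field F] (i : F) : SMul (SL2 F) (Pts F i) :=
  ⟨fun A => Quot.map (slVecSMul A) (by
    rintro v w ⟨n, hn⟩
    exact ⟨n, by simp [slVecSMul, hn, Matrix.mulVec_smul]⟩)⟩

instance (F : Type) [Field F] (i : F) : MulAction (SL2 F) (Pts F i) where
  one_smul p := by
    induction p using Quot.ind with | _ v => ?_
    show Quot.mk _ (slVecSMul 1 v) = Quot.mk _ v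
    congr 1
    apply Subtype.ext
    show ((1 : SL2 F) : Matrix (Fin 2) (Fin 2) F) *ᵥ v.1 = v.1
    rw [Matrix.SpecialLinearGroup.coe_one, Matrix.one_mulVec]
  mul_smul A B p := by
    induction p using Quot.ind with | _ v => ?_
    show Quot.mk _ (slVecSMul (A * B) v) = Quot.mk _ (slVecSMul A (slVecSMul B v))
    congr 1
    apply Subtype.ext
    show ((A * B : SL2 F) : Matrix (Fin 2) (Fin 2) F) *ᵥ v.1 =
      (A : Matrix (Fin 2) (Fin 2) F) *ᵥ ((B : Matrix (Fin 2) (Fin 2) F) *ᵥ v.1)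
    rw [Matrix.SpecialLinearGroup.coe_mul, Matrix.mulVec_mulVec]

/-- The stabilizer in `PSL(2,q)` of a point of `P`, i.e. the image in the quotient
`PSL(2,q) = SL(2,q)/center` of the stabilizer in `SL(2,q)`. -/
def pslPtStab (F : Type) [Field F] (i : F) (p : Pts F i) : Subgroup (PSL2 F) :=
  (MulAction.stabilizer (SL2 F) p).map (QuotientGroup.mk' (Subgroup.center (SL2 F)))

/-- The setwise stabilizer in `PSL(2,q)` of a set of points of `P`. -/
def pslSetStab (F : Type) [Field F] (i : F) (s : Set (Pts F i)) : Subgroup (PSL2 F) :=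
  (MulAction.stabilizer (SL2 F) s).map (QuotientGroup.mk' (Subgroup.center (SL2 F)))

section Aux

variable {F : Type} [Field F] {i : F}

lemma i_pow_four (hi : i ^ 2 = -1) : i ^ 4 = 1 := by
  have h : i ^ 4 = (i ^ 2) ^ 2 := by ring
  rw [h, hi]; ring

lemma i_ne_zero (hi : i ^ 2 = -1) : i ≠ 0 := by
  intro h
  rw [h] at hi
  norm_num at hi

lemma vrel_equivalence (hi : i ^ 2 = -1) : Equivalence (vrel F i) := by
  constructor
  · intro v; exact ⟨0, by simp⟩
  · rintro v w ⟨n, hn⟩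
    refine ⟨3 * n, ?_⟩
    rw [hn, smul_smul, ← pow_add]
    have h : i ^ (3 * n + n) = 1 := by
      rw [show 3 * n + n = 4 * n by ring, pow_mul, i_pow_four hi, one_pow]
    rw [h, one_smul]
  · rintro u v w ⟨n, hn⟩ ⟨m, hm⟩
    exact ⟨m + n, by rw [hm, hn, smul_smul, pow_add]⟩

lemma mkPt_eq_iff (hi : i ^ 2 = -1) {v w : Fin 2 → F} {hv : v ≠ 0} {hw : w ≠ 0} :
    mkPt F i v hv = mkPt F i w hw ↔ ∃ n : ℕ, w = i ^ n • v := by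
  constructor
  · intro h
    exact ((vrel_equivalence hi).eqvGen_iff).mp (Quot.eqvGen_exact h)
  · rintro ⟨n, hn⟩
    exact Quot.sound ⟨n, hn⟩

lemma smul_mkPt_eq_iff (hi : i ^ 2 = -1) (A : SL2 F) {v w : Fin 2 → F} {hv : v ≠ 0}
    {hw : w ≠ 0} :
    A • mkPt F i v hv = mkPt F i w hw ↔
      ∃ n : ℕ, w = i ^ n • ((A : Matrix (Fin 2) (Fin 2) F) *ᵥ v) := by
  have h : A • mkPt F i v hv
      = mkPt F i ((A : Matrix (Fin 2) (Fin 2) F) *ᵥ v) (slVecSMul A ⟨v, hv⟩).2 := rfl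
  rw [h]; exact mkPt_eq_iff hi

lemma mulVec_e1 (M : Matrix (Fin 2) (Fin 2) F) : M *ᵥ ![1, 0] = ![M 0 0, M 1 0] := by
  funext j
  fin_cases j <;> simp [Matrix.mulVec, dotProduct, Fin.sum_univ_two]

lemma mulVec_e2 (M : Matrix (Fin 2) (Fin 2) F) : M *ᵥ ![0, 1] = ![M 0 1, M 1 1] := by
  funext j
  fin_cases j <;> simp [Matrix.mulVec, dotProduct, Fin.sum_univ_two]

lemma key_lemma (hi : i ^ 2 = -1) {x0 x1 : F} {n : ℕ}
    (h0 : (1 : F) = i ^ n * x0) (h1 : (0 : F) = i ^ n * x1) : x1 = 0 ∧ x0 ^ 4 = 1 := by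
  have hin : i ^ n ≠ 0 := pow_ne_zero _ (i_ne_zero hi)
  constructor
  · rcases mul_eq_zero.mp h1.symm with h | h
    · exact absurd h hin
    · exact h
  · have h4 : (i ^ n * x0) ^ 4 = 1 := by rw [← h0]; norm_num
    have h5 : (i ^ 4) ^ n * x0 ^ 4 = 1 := by
      rw [← h4, mul_pow, ← pow_mul, ← pow_mul, Nat.mul_comm]
    rwa [i_pow_four hi, one_pow, one_mul] at h5

lemma fourth_roots (hi : i ^ 2 = -1) {c : F} (h : c ^ 4 = 1) :
    c = 1 ∨ c = -1 ∨ c = i ∨ c = -i := by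
  have hfac : (c - 1) * (c + 1) * (c - i) * (c + i) = 0 := by
    linear_combination h + (1 - c ^ 2) * hi
  rcases mul_eq_zero.mp hfac with h' | h'
  · rcases mul_eq_zero.mp h' with h'' | h''
    · rcases mul_eq_zero.mp h'' with h3 | h3
      · exact Or.inl (sub_eq_zero.mp h3)
      · exact Or.inr (Or.inl (eq_neg_of_add_eq_zero_left h3))
    · exact Or.inr (Or.inr (Or.inl (sub_eq_zero.mp h'')))
  · exact Or.inr (Or.inr (Or.inr (eq_neg_of_add_eq_zero_left h')))

end Aux
section Aux2

variable {F : Type} [Field F] {i : F}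

/-- The matrix `a = [[0,-1],[1,0]]` as an element of `SL(2,F)`. -/
def aSL (F : Type) [Field F] : SL2 F :=
  ⟨!![0, -1; 1, 0], by norm_num [Matrix.det_fin_two_of]⟩

/-- The matrix `b = [[0,i],[i,0]]` as an element of `SL(2,F)`. -/
def bSL (i : F) (hi : i ^ 2 = -1) : SL2 F :=
  ⟨!![0, i; i, 0], by
    rw [Matrix.det_fin_two_of, show i * i = i ^ 2 by ring, hi]; ring⟩

lemma neg_one_mem_center : (-1 : SL2 F) ∈ Subgroup.center (SL2 F) :=
  Subgroup.mem_center_iff.mpr fun g => Subtype.ext (by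
    simp [Matrix.SpecialLinearGroup.coe_mul, Matrix.SpecialLinearGroup.coe_neg])

lemma mk_neg (g : SL2 F) :
    (QuotientGroup.mk (-g) : PSL2 F) = QuotientGroup.mk g := by
  have h : (-g) = (-1) * g := (neg_one_mul g).symm
  have h1 : (QuotientGroup.mk (-1 : SL2 F) : PSL2 F) = 1 :=
    (QuotientGroup.eq_one_iff _).mpr neg_one_mem_center
  rw [h, QuotientGroup.mk_mul, h1, one_mul]

lemma pts_ne (hi : i ^ 2 = -1) :
    mkPt F i ![1, 0] (vec_fst_ne_zero 0) ≠ mkPt F i ![0, 1] (vec_snd_ne_zero 0) := by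
  intro h
  obtain ⟨n, hn⟩ := (mkPt_eq_iff hi).mp h
  have h0 := congrFun hn 0
  simp at h0
  exact pow_ne_zero n (i_ne_zero hi) h0.symm

lemma aSL_mem_stab (hi : i ^ 2 = -1) :
    aSL F ∈ MulAction.stabilizer (SL2 F)
      ({mkPt F i ![1, 0] (vec_fst_ne_zero 0), mkPt F i ![0, 1] (vec_snd_ne_zero 0)} :
        Set (Pts F i)) := by
  rw [MulAction.mem_stabilizer_iff, Set.smul_set_insert, Set.smul_set_singleton]
  have h1 : aSL F • mkPt F i ![1, 0] (vec_fst_ne_zero 0)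
      = mkPt F i ![0, 1] (vec_snd_ne_zero 0) := by
    rw [smul_mkPt_eq_iff hi, mulVec_e1]
    refine ⟨0, ?_⟩
    funext j
    fin_cases j <;> simp [aSL]
  have h2 : aSL F • mkPt F i ![0, 1] (vec_snd_ne_zero 0)
      = mkPt F i ![1, 0] (vec_fst_ne_zero 0) := by
    rw [smul_mkPt_eq_iff hi, mulVec_e2]
    refine ⟨2, ?_⟩
    funext j
    fin_cases j <;> simp [aSL, hi]
  rw [h1, h2, Set.pair_comm]

lemma bSL_mem_stab (hi : i ^ 2 = -1) :
    bSL i hi ∈ MulAction.stabilizer (SL2 F)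
      ({mkPt F i ![1, 0] (vec_fst_ne_zero 0), mkPt F i ![0, 1] (vec_snd_ne_zero 0)} :
        Set (Pts F i)) := by
  have hi3 : i ^ 3 * i = 1 := by
    rw [show i ^ 3 * i = i ^ 4 by ring, i_pow_four hi]
  rw [MulAction.mem_stabilizer_iff, Set.smul_set_insert, Set.smul_set_singleton]
  have h1 : bSL i hi • mkPt F i ![1, 0] (vec_fst_ne_zero 0)
      = mkPt F i ![0, 1] (vec_snd_ne_zero 0) := by
    rw [smul_mkPt_eq_iff hi, mulVec_e1]
    refine ⟨3, ?_⟩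
    funext j
    fin_cases j <;> simp [bSL, hi3]
  have h2 : bSL i hi • mkPt F i ![0, 1] (vec_snd_ne_zero 0)
      = mkPt F i ![1, 0] (vec_fst_ne_zero 0) := by
    rw [smul_mkPt_eq_iff hi, mulVec_e2]
    refine ⟨3, ?_⟩
    funext j
    fin_cases j <;> simp [bSL, hi3]
  rw [h1, h2, Set.pair_comm]

end Aux2
section Aux3

variable {F : Type} [Field F] {i : F}

lemma stab_char (hi : i ^ 2 = -1) {A : SL2 F}
    (hA : A ∈ MulAction.stabilizer (SL2 F)
      ({mkPt F i ![1, 0] (vec_fst_ne_zero 0), mkPt F i ![0, 1] (vec_snd_ne_zero 0)} :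
        Set (Pts F i))) :
    (A : Matrix (Fin 2) (Fin 2) F) = !![1, 0; 0, 1] ∨
    (A : Matrix (Fin 2) (Fin 2) F) = !![-1, 0; 0, -1] ∨
    (A : Matrix (Fin 2) (Fin 2) F) = !![-i, 0; 0, i] ∨
    (A : Matrix (Fin 2) (Fin 2) F) = !![i, 0; 0, -i] ∨
    (A : Matrix (Fin 2) (Fin 2) F) = !![0, -1; 1, 0] ∨
    (A : Matrix (Fin 2) (Fin 2) F) = !![0, 1; -1, 0] ∨
    (A : Matrix (Fin 2) (Fin 2) F) = !![0, i; i, 0] ∨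
    (A : Matrix (Fin 2) (Fin 2) F) = !![0, -i; -i, 0] := by
  rw [MulAction.mem_stabilizer_iff, Set.smul_set_insert, Set.smul_set_singleton] at hA
  have hdet : (A : Matrix (Fin 2) (Fin 2) F) 0 0 * (A : Matrix (Fin 2) (Fin 2) F) 1 1
      - (A : Matrix (Fin 2) (Fin 2) F) 0 1 * (A : Matrix (Fin 2) (Fin 2) F) 1 0 = 1 := by
    rw [← Matrix.det_fin_two]; exact A.2
  rcases Set.pair_eq_pair_iff.mp hA with ⟨h1, h2⟩ | ⟨h1, h2⟩
  · -- A fixes both points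
    rw [smul_mkPt_eq_iff hi, mulVec_e1] at h1
    rw [smul_mkPt_eq_iff hi, mulVec_e2] at h2
    obtain ⟨n, hn⟩ := h1
    obtain ⟨m, hm⟩ := h2
    have ha0 : (1 : F) = i ^ n * (A : Matrix (Fin 2) (Fin 2) F) 0 0 := by
      simpa using congrFun hn 0
    have ha1 : (0 : F) = i ^ n * (A : Matrix (Fin 2) (Fin 2) F) 1 0 := by
      simpa using congrFun hn 1
    have hb0 : (0 : F) = i ^ m * (A : Matrix (Fin 2) (Fin 2) F) 0 1 := by
      simpa using congrFun hm 0
    have hb1 : (1 : F) = i ^ m * (A : Matrix (Fin 2) (Fin 2) F) 1 1 := by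
      simpa using congrFun hm 1
    obtain ⟨h10, h004⟩ := key_lemma hi ha0 ha1
    obtain ⟨h01, -⟩ := key_lemma hi hb1 hb0
    have hd : (A : Matrix (Fin 2) (Fin 2) F) 0 0 * (A : Matrix (Fin 2) (Fin 2) F) 1 1 = 1 := by
      rw [h01, h10] at hdet; linear_combination hdet
    rcases fourth_roots hi h004 with hc | hc | hc | hc
    · rw [hc, one_mul] at hd
      refine Or.inl ?_
      ext j k
      fin_cases j <;> fin_cases k <;> simp [hc, h01, h10, hd]
    · rw [hc] at hd
      have h11 : (A : Matrix (Fin 2) (Fin 2) F) 1 1 = -1 := by linear_combination -hd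
      refine Or.inr (Or.inl ?_)
      ext j k
      fin_cases j <;> fin_cases k <;> simp [hc, h01, h10, h11]
    · rw [hc] at hd
      have h11 : (A : Matrix (Fin 2) (Fin 2) F) 1 1 = -i := by
        linear_combination (-i) * hd + (A : Matrix (Fin 2) (Fin 2) F) 1 1 * hi
      refine Or.inr (Or.inr (Or.inr (Or.inl ?_)))
      ext j k
      fin_cases j <;> fin_cases k <;> simp [hc, h01, h10, h11]
    · rw [hc] at hd
      have h11 : (A : Matrix (Fin 2) (Fin 2) F) 1 1 = i := by
        linear_combination i * hd + (A : Matrix (Fin 2) (Fin 2) F) 1 1 * hi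
      refine Or.inr (Or.inr (Or.inl ?_))
      ext j k
      fin_cases j <;> fin_cases k <;> simp [hc, h01, h10, h11]
  · -- A swaps the two points
    rw [smul_mkPt_eq_iff hi, mulVec_e1] at h1
    rw [smul_mkPt_eq_iff hi, mulVec_e2] at h2
    obtain ⟨n, hn⟩ := h1
    obtain ⟨m, hm⟩ := h2
    have ha0 : (0 : F) = i ^ n * (A : Matrix (Fin 2) (Fin 2) F) 0 0 := by
      simpa using congrFun hn 0
    have ha1 : (1 : F) = i ^ n * (A : Matrix (Fin 2) (Fin 2) F) 1 0 := by
      simpa using congrFun hn 1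
    have hb0 : (1 : F) = i ^ m * (A : Matrix (Fin 2) (Fin 2) F) 0 1 := by
      simpa using congrFun hm 0
    have hb1 : (0 : F) = i ^ m * (A : Matrix (Fin 2) (Fin 2) F) 1 1 := by
      simpa using congrFun hm 1
    obtain ⟨h00, h104⟩ := key_lemma hi ha1 ha0
    obtain ⟨h11, -⟩ := key_lemma hi hb0 hb1
    have hd : (A : Matrix (Fin 2) (Fin 2) F) 0 1 * (A : Matrix (Fin 2) (Fin 2) F) 1 0 = -1 := by
      rw [h00, h11] at hdet; linear_combination -hdet
    rcases fourth_roots hi h104 with hc | hc | hc | hc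
    · rw [hc, mul_one] at hd
      refine Or.inr (Or.inr (Or.inr (Or.inr (Or.inl ?_))))
      ext j k
      fin_cases j <;> fin_cases k <;> simp [hc, h00, h11, hd]
    · rw [hc] at hd
      have h01 : (A : Matrix (Fin 2) (Fin 2) F) 0 1 = 1 := by linear_combination -hd
      refine Or.inr (Or.inr (Or.inr (Or.inr (Or.inr (Or.inl ?_)))))
      ext j k
      fin_cases j <;> fin_cases k <;> simp [hc, h00, h11, h01]
    · rw [hc] at hd
      have h01 : (A : Matrix (Fin 2) (Fin 2) F) 0 1 = i := by
        linear_combination (-i) * hd + (A : Matrix (Fin 2) (Fin 2) F) 0 1 * hi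
      refine Or.inr (Or.inr (Or.inr (Or.inr (Or.inr (Or.inr (Or.inl ?_))))))
      ext j k
      fin_cases j <;> fin_cases k <;> simp [hc, h00, h11, h01]
    · rw [hc] at hd
      have h01 : (A : Matrix (Fin 2) (Fin 2) F) 0 1 = -i := by
        linear_combination i * hd + (A : Matrix (Fin 2) (Fin 2) F) 0 1 * hi
      refine Or.inr (Or.inr (Or.inr (Or.inr (Or.inr (Or.inr (Or.inr ?_))))))
      ext j k
      fin_cases j <;> fin_cases k <;> simp [hc, h00, h11, h01]

end Aux3
section Aux4

variable {F : Type} [Field F] {i : F}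

lemma i_ne_neg_i (hi : i ^ 2 = -1) (h2 : (2 : F) ≠ 0) : i ≠ -i := by
  intro h
  apply i_ne_zero hi
  have h0 : (2 : F) * i = 0 := by linear_combination h
  exact (mul_eq_zero.mp h0).resolve_left h2

lemma coe_ab (hi : i ^ 2 = -1) :
    ((aSL F * bSL i hi : SL2 F) : Matrix (Fin 2) (Fin 2) F) = !![-i, 0; 0, i] := by
  rw [Matrix.SpecialLinearGroup.coe_mul]
  show !![0, -1; 1, 0] * !![0, i; i, 0] = _
  rw [Matrix.mul_fin_two]
  ext j k
  fin_cases j <;> fin_cases k <;> simp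

lemma coe_ba (hi : i ^ 2 = -1) :
    ((bSL i hi * aSL F : SL2 F) : Matrix (Fin 2) (Fin 2) F) = !![i, 0; 0, -i] := by
  rw [Matrix.SpecialLinearGroup.coe_mul]
  show !![0, i; i, 0] * !![0, -1; 1, 0] = _
  rw [Matrix.mul_fin_two]
  ext j k
  fin_cases j <;> fin_cases k <;> simp

lemma coe_ab_a (hi : i ^ 2 = -1) :
    (((aSL F * bSL i hi) * aSL F : SL2 F) : Matrix (Fin 2) (Fin 2) F) = !![0, i; i, 0] := by
  rw [Matrix.SpecialLinearGroup.coe_mul, coe_ab hi]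
  show !![-i, 0; 0, i] * !![0, -1; 1, 0] = _
  rw [Matrix.mul_fin_two]
  ext j k
  fin_cases j <;> fin_cases k <;> simp

lemma coe_a_ab (hi : i ^ 2 = -1) :
    ((aSL F * (aSL F * bSL i hi) : SL2 F) : Matrix (Fin 2) (Fin 2) F) = !![0, -i; -i, 0] := by
  rw [Matrix.SpecialLinearGroup.coe_mul, coe_ab hi]
  show !![0, -1; 1, 0] * !![-i, 0; 0, i] = _
  rw [Matrix.mul_fin_two]
  ext j k
  fin_cases j <;> fin_cases k <;> simp

lemma b_mul_b (hi : i ^ 2 = -1) : bSL i hi * bSL i hi = -1 := by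
  apply Subtype.ext
  rw [Matrix.SpecialLinearGroup.coe_mul, Matrix.SpecialLinearGroup.coe_neg,
    Matrix.SpecialLinearGroup.coe_one]
  show !![0, i; i, 0] * !![0, i; i, 0] = _
  rw [Matrix.mul_fin_two]
  have hii : i * i = -1 := by linear_combination hi
  ext j k
  fin_cases j <;> fin_cases k <;> simp [hii, Matrix.one_apply]

/-- the class of `a` in `PSL2` is nontrivial -/
lemma mk_a_ne_one (hi : i ^ 2 = -1) (h2 : (2 : F) ≠ 0) :
    (QuotientGroup.mk (aSL F) : PSL2 F) ≠ 1 := by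
  intro h
  have hc := (QuotientGroup.eq_one_iff _).mp h
  have hcomm := Subgroup.mem_center_iff.mp hc (bSL i hi)
  have h' : ((bSL i hi * aSL F : SL2 F) : Matrix (Fin 2) (Fin 2) F)
      = ((aSL F * bSL i hi : SL2 F) : Matrix (Fin 2) (Fin 2) F) := congrArg _ hcomm
  rw [coe_ab hi, coe_ba hi] at h'
  have he : i = -i := by simpa using congrFun (congrFun h' 0) 0
  exact i_ne_neg_i hi h2 he

lemma mk_b_ne_one (hi : i ^ 2 = -1) (h2 : (2 : F) ≠ 0) :
    (QuotientGroup.mk (bSL i hi) : PSL2 F) ≠ 1 := by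
  intro h
  have hc := (QuotientGroup.eq_one_iff _).mp h
  have hcomm := Subgroup.mem_center_iff.mp hc (aSL F)
  have h' : ((aSL F * bSL i hi : SL2 F) : Matrix (Fin 2) (Fin 2) F)
      = ((bSL i hi * aSL F : SL2 F) : Matrix (Fin 2) (Fin 2) F) := congrArg _ hcomm
  rw [coe_ab hi, coe_ba hi] at h'
  have he : -i = i := by simpa using congrFun (congrFun h' 0) 0
  exact i_ne_neg_i hi h2 he.symm

lemma mk_ab_ne_one (hi : i ^ 2 = -1) (h2 : (2 : F) ≠ 0) :
    (QuotientGroup.mk (aSL F * bSL i hi) : PSL2 F) ≠ 1 := by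
  intro h
  have hc := (QuotientGroup.eq_one_iff _).mp h
  have hcomm := Subgroup.mem_center_iff.mp hc (aSL F)
  have h' : ((aSL F * (aSL F * bSL i hi) : SL2 F) : Matrix (Fin 2) (Fin 2) F)
      = (((aSL F * bSL i hi) * aSL F : SL2 F) : Matrix (Fin 2) (Fin 2) F) := congrArg _ hcomm
  rw [coe_ab_a hi, coe_a_ab hi] at h'
  have he : -i = i := by simpa using congrFun (congrFun h' 0) 1
  exact i_ne_neg_i hi h2 he.symm

end Aux4
section Aux5

variable {F : Type} [Field F] {i : F}

lemma carrier_eq (hi : i ^ 2 = -1) :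
    ((pslSetStab F i
        {mkPt F i ![1, 0] (vec_fst_ne_zero 0), mkPt F i ![0, 1] (vec_snd_ne_zero 0)} :
      Subgroup (PSL2 F)) : Set (PSL2 F))
      = {1, QuotientGroup.mk (aSL F), QuotientGroup.mk (bSL i hi),
          QuotientGroup.mk (aSL F) * QuotientGroup.mk (bSL i hi)} := by
  ext g
  constructor
  · intro hg
    obtain ⟨A, hA, rfl⟩ := Subgroup.mem_map.mp hg
    simp only [QuotientGroup.mk'_apply]
    rcases stab_char hi hA with h | h | h | h | h | h | h | h
    · have hA1 : A = 1 := Subtype.ext (by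
        rw [h, Matrix.SpecialLinearGroup.coe_one, Matrix.one_fin_two])
      rw [hA1]
      simp
    · have hA1 : A = -1 := Subtype.ext (by
        rw [h, Matrix.SpecialLinearGroup.coe_neg, Matrix.SpecialLinearGroup.coe_one,
          Matrix.one_fin_two]
        ext j k
        fin_cases j <;> fin_cases k <;> simp)
      rw [hA1, show ((-1 : SL2 F)) = -(1 : SL2 F) from rfl, mk_neg]
      simp
    · have hA1 : A = aSL F * bSL i hi := Subtype.ext (by rw [h, coe_ab hi])
      rw [hA1, QuotientGroup.mk_mul]
      simp
    · have hA1 : A = -(aSL F * bSL i hi) := Subtype.ext (by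
        rw [h, Matrix.SpecialLinearGroup.coe_neg, coe_ab hi]
        ext j k
        fin_cases j <;> fin_cases k <;> simp)
      rw [hA1, mk_neg, QuotientGroup.mk_mul]
      simp
    · have hA1 : A = aSL F := Subtype.ext h
      rw [hA1]
      simp
    · have hA1 : A = -aSL F := Subtype.ext (by
        rw [h, Matrix.SpecialLinearGroup.coe_neg]
        ext j k
        fin_cases j <;> fin_cases k <;> simp [aSL])
      rw [hA1, mk_neg]
      simp
    · have hA1 : A = bSL i hi := Subtype.ext h
      rw [hA1]
      simp
    · have hA1 : A = -bSL i hi := Subtype.ext (by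
        rw [h, Matrix.SpecialLinearGroup.coe_neg]
        ext j k
        fin_cases j <;> fin_cases k <;> simp [bSL])
      rw [hA1, mk_neg]
      simp
  · intro hg
    simp only [Set.mem_insert_iff, Set.mem_singleton_iff] at hg
    rcases hg with rfl | rfl | rfl | rfl
    · exact one_mem _
    · exact Subgroup.mem_map.mpr ⟨aSL F, aSL_mem_stab hi, rfl⟩
    · exact Subgroup.mem_map.mpr ⟨bSL i hi, bSL_mem_stab hi, rfl⟩
    · exact Subgroup.mem_map.mpr
        ⟨aSL F * bSL i hi, mul_mem (aSL_mem_stab hi) (bSL_mem_stab hi), by rw [_root_.map_mul]; rfl⟩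

end Aux5
/-- For `q` not a power of 5, the setwise stabilizer in `PSL(2,q)` of the pair
`{[(1,0)],[(0,1)]}` is generated by the classes of `[[0,-1],[1,0]]` and `[[0,i],[i,0]]`,
and has order 4. -/
theorem stmt_5 (q : ℕ) (F : Type) [Field F] [Fintype F]
    (hcard : Fintype.card F = q) (hq : q % 4 = 1) (h5 : ringChar F ≠ 5)
    (i : F) (hi : i ^ 2 = -1) :
    pslSetStab F i
        {mkPt F i ![1, 0] (vec_fst_ne_zero 0), mkPt F i ![0, 1] (vec_snd_ne_zero 0)} =
      Subgroup.closure
        {(QuotientGroup.mk (⟨!![0, -1; 1, 0], by norm_num [Matrix.det_fin_two_of]⟩ : SL2 F) :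
            PSL2 F),
          (QuotientGroup.mk
            (⟨!![0, i; i, 0], by
              rw [Matrix.det_fin_two_of, show i * i = i ^ 2 by ring, hi]; ring⟩ : SL2 F) :
            PSL2 F)} ∧
    Nat.card (pslSetStab F i
      {mkPt F i ![1, 0] (vec_fst_ne_zero 0), mkPt F i ![0, 1] (vec_snd_ne_zero 0)}) = 4 := by
  have hchar2 : ringChar F ≠ 2 := by
    intro h
    have h2 := FiniteField.even_card_of_char_two h
    rw [hcard] at h2
    omega
  have h2ne : (2 : F) ≠ 0 := Ring.two_ne_zero hchar2
  have hK := carrier_eq (F := F) hi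
  have hX1 := mk_a_ne_one (F := F) hi h2ne
  have hY1 := mk_b_ne_one (F := F) hi h2ne
  have hZ1 : (QuotientGroup.mk (aSL F) : PSL2 F) * QuotientGroup.mk (bSL i hi) ≠ 1 := by
    rw [← QuotientGroup.mk_mul]
    exact mk_ab_ne_one hi h2ne
  set X := (QuotientGroup.mk (aSL F) : PSL2 F) with hXdef
  set Y := (QuotientGroup.mk (bSL i hi) : PSL2 F) with hYdef
  have hXY : X ≠ Y := by
    intro h
    apply hZ1
    rw [h, hYdef, ← QuotientGroup.mk_mul, b_mul_b hi,
      show ((-1 : SL2 F)) = -(1 : SL2 F) from rfl, mk_neg, QuotientGroup.mk_one]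
  have hXZ : X ≠ X * Y := fun h => hY1 (left_eq_mul.mp h)
  have hYZ : Y ≠ X * Y := fun h => hX1 (right_eq_mul.mp h)
  have hXK : X ∈ pslSetStab F i
      {mkPt F i ![1, 0] (vec_fst_ne_zero 0), mkPt F i ![0, 1] (vec_snd_ne_zero 0)} :=
    Subgroup.mem_map.mpr ⟨aSL F, aSL_mem_stab hi, rfl⟩
  have hYK : Y ∈ pslSetStab F i
      {mkPt F i ![1, 0] (vec_fst_ne_zero 0), mkPt F i ![0, 1] (vec_snd_ne_zero 0)} :=
    Subgroup.mem_map.mpr ⟨bSL i hi, bSL_mem_stab hi, rfl⟩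
  constructor
  · apply le_antisymm
    · intro g hg
      have hgs : g ∈ ((pslSetStab F i
          {mkPt F i ![1, 0] (vec_fst_ne_zero 0), mkPt F i ![0, 1] (vec_snd_ne_zero 0)} :
          Subgroup (PSL2 F)) : Set (PSL2 F)) := hg
      rw [hK] at hgs
      simp only [Set.mem_insert_iff, Set.mem_singleton_iff] at hgs
      rcases hgs with rfl | rfl | rfl | rfl
      · exact one_mem _
      · exact Subgroup.subset_closure (Set.mem_insert _ _)
      · exact Subgroup.subset_closure (Set.mem_insert_of_mem _ rfl)
      · exact mul_mem (Subgroup.subset_closure (Set.mem_insert _ _))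
          (Subgroup.subset_closure (Set.mem_insert_of_mem _ rfl))
    · rw [Subgroup.closure_le]
      intro g hg
      simp only [Set.mem_insert_iff, Set.mem_singleton_iff] at hg
      rcases hg with rfl | rfl
      · exact hXK
      · exact hYK
  · have hcount : ({1, X, Y, X * Y} : Set (PSL2 F)).ncard = 4 := by
      have f1 : (1 : PSL2 F) ∉ ({X, Y, X * Y} : Set (PSL2 F)) := by
        simp only [Set.mem_insert_iff, Set.mem_singleton_iff]
        push_neg
        exact ⟨Ne.symm hX1, Ne.symm hY1, Ne.symm hZ1⟩
      have f2 : X ∉ ({Y, X * Y} : Set (PSL2 F)) := by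
        simp only [Set.mem_insert_iff, Set.mem_singleton_iff]
        push_neg
        exact ⟨hXY, hXZ⟩
      rw [Set.ncard_insert_of_notMem f1 (Set.toFinite _),
        Set.ncard_insert_of_notMem f2 (Set.toFinite _), Set.ncard_pair hYZ]
    rw [← SetLike.coe_sort_coe, Nat.card_coe_set_eq, hK, hcount]
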